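/- Let x : ℝ → ℝ⁴ be differentiable with components (x₁, x₂, x₃, x₄) satisfying the closed-loop equations x₁'(t) = −3x₁(t) − 0.5x₂(t), x₂'(t) = −0.15·sin(x₁(t)) − 3.02x₂(t) + 0.01x₃(t), x₃'(t) = −3.1x₃(t) − 0.03x₁(t), x₄'(t) = −3.03x₄(t) − 0.01x₂(t) for all t ≥ 0. If x₁(0)² + x₂(0)² + x₃(0)² + x₄(0)² ≤ 0.09, then for every t ≥ 0 one has x₁(t)² + x₂(t)² + x₃(t)² + x₄(t)² ≤ 6.25; i.e., the trajectory never enters the unsafe set consisting of all points outside the closed ball of radius 2.5 centered at the origin. -/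

import Mathlib

private lemma sin_cross_bound (a b : ℝ) : -(b * Real.sin a) ≤ (a ^ 2 + b ^ 2) / 2 := by
  have hs : |Real.sin a| ≤ |a| := Real.abs_sin_le_abs
  have h1 : -(b * Real.sin a) ≤ |b| * |Real.sin a| := by
    calc -(b * Real.sin a) ≤ |-(b * Real.sin a)| := le_abs_self _
      _ = |b| * |Real.sin a| := by rw [abs_neg, abs_mul]
  have h2 : |b| * |Real.sin a| ≤ |b| * |a| := mul_le_mul_of_nonneg_left hs (abs_nonneg _)
  nlinarith [sq_nonneg (|a| - |b|), sq_abs a, sq_abs b, abs_nonneg a, abs_nonneg b]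

private lemma key_ineq (a b c d s : ℝ) (hs : -(b * s) ≤ (a ^ 2 + b ^ 2) / 2) :
    2 * a * (-3 * a - 0.5 * b) + 2 * b * (-0.15 * s - 3.02 * b + 0.01 * c)
      + 2 * c * (-3.1 * c - 0.03 * a) + 2 * d * (-3.03 * d - 0.01 * b) ≤ 0 := by
  nlinarith [sq_nonneg (a - b), sq_nonneg (a + b), sq_nonneg (b - c), sq_nonneg (b + c),
    sq_nonneg (a - c), sq_nonneg (a + c), sq_nonneg (b - d), sq_nonneg (b + d)]

theorem closed_loop_system_safety (x₁ x₂ x₃ x₄ : ℝ → ℝ)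
    (hd₁ : Differentiable ℝ x₁) (hd₂ : Differentiable ℝ x₂)
    (hd₃ : Differentiable ℝ x₃) (hd₄ : Differentiable ℝ x₄)
    (hode₁ : ∀ t : ℝ, 0 ≤ t → deriv x₁ t = -3 * x₁ t - 0.5 * x₂ t)
    (hode₂ : ∀ t : ℝ, 0 ≤ t →
      deriv x₂ t = -0.15 * Real.sin (x₁ t) - 3.02 * x₂ t + 0.01 * x₃ t)
    (hode₃ : ∀ t : ℝ, 0 ≤ t → deriv x₃ t = -3.1 * x₃ t - 0.03 * x₁ t)
    (hode₄ : ∀ t : ℝ, 0 ≤ t → deriv x₄ t = -3.03 * x₄ t - 0.01 * x₂ t)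
    (hinit : (x₁ 0) ^ 2 + (x₂ 0) ^ 2 + (x₃ 0) ^ 2 + (x₄ 0) ^ 2 ≤ 0.09) :
    ∀ t : ℝ, 0 ≤ t →
      (x₁ t) ^ 2 + (x₂ t) ^ 2 + (x₃ t) ^ 2 + (x₄ t) ^ 2 ≤ 6.25 := by
  set V : ℝ → ℝ := fun t => (x₁ t) ^ 2 + (x₂ t) ^ 2 + (x₃ t) ^ 2 + (x₄ t) ^ 2 with hV
  have hVd : ∀ t : ℝ, HasDerivAt V
      (2 * x₁ t * deriv x₁ t + 2 * x₂ t * deriv x₂ t + 2 * x₃ t * deriv x₃ t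
        + 2 * x₄ t * deriv x₄ t) t := by
    intro t
    have h1 := ((hd₁ t).hasDerivAt.fun_pow 2)
    have h2 := ((hd₂ t).hasDerivAt.fun_pow 2)
    have h3 := ((hd₃ t).hasDerivAt.fun_pow 2)
    have h4 := ((hd₄ t).hasDerivAt.fun_pow 2)
    have := ((h1.fun_add h2).fun_add h3).fun_add h4
    simpa [pow_one, mul_comm, mul_assoc, mul_left_comm] using this
  have hVdiff : Differentiable ℝ V := ((((hd₁.pow 2).add (hd₂.pow 2)).add (hd₃.pow 2)).add (hd₄.pow 2))
  have hanti : AntitoneOn V (Set.Ici (0 : ℝ)) := by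
    apply antitoneOn_of_deriv_nonpos (convex_Ici 0) hVdiff.continuous.continuousOn
      (fun t _ => (hVdiff t).differentiableWithinAt)
    · intro t ht
      rw [interior_Ici] at ht
      have ht' : (0 : ℝ) ≤ t := le_of_lt ht
      rw [(hVd t).deriv, hode₁ t ht', hode₂ t ht', hode₃ t ht', hode₄ t ht']
      exact key_ineq (x₁ t) (x₂ t) (x₃ t) (x₄ t) (Real.sin (x₁ t))
        (sin_cross_bound (x₁ t) (x₂ t))
  intro t ht
  have := hanti (Set.self_mem_Ici) (Set.mem_Ici.mpr ht) ht
  calc V t ≤ V 0 := this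
    _ ≤ 0.09 := hinit
    _ ≤ 6.25 := by norm_num
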